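/- Let E, A ∈ ℂ^{n×n}, B ∈ ℂ^{n×m}, C ∈ ℂ^{p×n}, D ∈ ℂ^{p×m}, and let P_l, P_r ∈ ℂ^{n×n} satisfy P_l² = P_l, P_r² = P_r, E P_r = P_l E, and A P_r = P_l A. Let V_f, W_f ∈ ℂ^{n×k} and V_∞, W_∞ ∈ ℂ^{n×k_∞}, and set V = [V_f, V_∞] and W = [W_f, W_∞]. Assume the column span of V_∞ contains the range of I − P_r and the column span of W_∞ contains the range of (I − P_l)ᵀ. Let σ ∈ ℂ, b ∈ ℂ^m, c ∈ ℂ^p be such that σE − A is invertible, (σE − A)^{-1} P_l B b lies in the column span of V_f, ((σE − A)ᵀ)^{-1} P_rᵀ Cᵀ c lies in the column span of W_f, and σ Wᵀ E V − Wᵀ A V is invertible. Then, with E_r = Wᵀ E V, A_r = Wᵀ A V, B_r = Wᵀ B, C_r = C V, the bitangential Hermite condition cᵀ G′(σ) b = cᵀ G_r′(σ) b holds; explicitly, cᵀ C (σE − A)^{-1} E (σE − A)^{-1} B b = cᵀ C_r (σE_r − A_r)^{-1} E_r (σE_r − A_r)^{-1} B_r b. -/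

import Mathlib

open Matrix

/-- Interpolatory model reduction of DAEs (Theorem 3.1 of Gugercin–Stykel–Wyatt,
bitangential Hermite condition).  With `V = [V_f, V_∞]`, `W = [W_f, W_∞]`, where
the column span of `V_∞` contains the range of `I − P_r`, the column span of
`W_∞` contains the range of `(I − P_l)ᵀ`, `(σE − A)⁻¹ P_l B b` lies in the
column span of `V_f`, and `((σE − A)ᵀ)⁻¹ P_rᵀ Cᵀ c` lies in the column span of
`W_f`, the Petrov–Galerkin reduced model satisfies `cᵀ G′(σ) b = cᵀ G_r′(σ) b`;
explicitly, `cᵀ C (σE − A)⁻¹ E (σE − A)⁻¹ B b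
  = cᵀ C_r (σE_r − A_r)⁻¹ E_r (σE_r − A_r)⁻¹ B_r b`. -/
theorem dae_bitangential_hermite_interpolation
    (n m p k kinf : ℕ)
    (E A : Matrix (Fin n) (Fin n) ℂ)
    (B : Matrix (Fin n) (Fin m) ℂ)
    (C : Matrix (Fin p) (Fin n) ℂ)
    (Pl Pr : Matrix (Fin n) (Fin n) ℂ)
    (hPl : Pl * Pl = Pl) (hPr : Pr * Pr = Pr)
    (hEP : E * Pr = Pl * E) (hAP : A * Pr = Pl * A)
    (Vf Wf : Matrix (Fin n) (Fin k) ℂ)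
    (Vinf Winf : Matrix (Fin n) (Fin kinf) ℂ)
    (V W : Matrix (Fin n) (Fin k ⊕ Fin kinf) ℂ)
    (hV : V = fromCols Vf Vinf)
    (hW : W = fromCols Wf Winf)
    (hVinf : ∀ x : Fin n → ℂ, ∃ y : Fin kinf → ℂ,
      (1 - Pr).mulVec x = Vinf.mulVec y)
    (hWinf : ∀ x : Fin n → ℂ, ∃ y : Fin kinf → ℂ,
      ((1 - Pl)ᵀ).mulVec x = Winf.mulVec y)
    (σ : ℂ) (b : Fin m → ℂ) (c : Fin p → ℂ)
    (hfull : IsUnit (σ • E - A))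
    (hspanV : ∃ ζ : Fin k → ℂ,
      (σ • E - A)⁻¹.mulVec (Pl.mulVec (B.mulVec b)) = Vf.mulVec ζ)
    (hspanW : ∃ ζ : Fin k → ℂ,
      ((σ • E - A)ᵀ)⁻¹.mulVec (Prᵀ.mulVec (Cᵀ.mulVec c)) = Wf.mulVec ζ)
    (hred : IsUnit (σ • (Wᵀ * E * V) - Wᵀ * A * V)) :
    c ⬝ᵥ (C * (σ • E - A)⁻¹ * E * (σ • E - A)⁻¹ * B).mulVec b
      = c ⬝ᵥ ((C * V) * (σ • (Wᵀ * E * V) - Wᵀ * A * V)⁻¹ * (Wᵀ * E * V)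
              * (σ • (Wᵀ * E * V) - Wᵀ * A * V)⁻¹ * (Wᵀ * B)).mulVec b := by

  classical
  set K : Matrix (Fin n) (Fin n) ℂ := σ • E - A with hKdef
  have hKdet : IsUnit K.det := (Matrix.isUnit_iff_isUnit_det K).mp hfull
  have hKinv : K⁻¹ * K = 1 := Matrix.nonsing_inv_mul K hKdet
  have hKinv' : K * K⁻¹ = 1 := Matrix.mul_nonsing_inv K hKdet
  -- commutation of K with the projectors
  have hKPr : K * Pr = Pl * K := by
    simp only [hKdef, Matrix.sub_mul, Matrix.mul_sub, Matrix.smul_mul, Matrix.mul_smul,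
      hEP, hAP]
  have hinv_comm : K⁻¹ * Pl = Pr * K⁻¹ := by
    have h1 : K⁻¹ * (Pl * K) * K⁻¹ = K⁻¹ * (K * Pr) * K⁻¹ := by rw [hKPr]
    calc K⁻¹ * Pl = K⁻¹ * Pl * (K * K⁻¹) := by rw [hKinv', Matrix.mul_one]
      _ = K⁻¹ * (Pl * K) * K⁻¹ := by simp only [Matrix.mul_assoc]
      _ = K⁻¹ * (K * Pr) * K⁻¹ := h1
      _ = (K⁻¹ * K) * (Pr * K⁻¹) := by rw [Matrix.mul_assoc, Matrix.mul_assoc, Matrix.mul_assoc]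
      _ = Pr * K⁻¹ := by rw [hKinv, Matrix.one_mul]
  have hinvT_comm : Plᵀ * (Kᵀ)⁻¹ = (Kᵀ)⁻¹ * Prᵀ := by
    have h := congrArg Matrix.transpose hinv_comm
    simp only [Matrix.transpose_mul, Matrix.transpose_nonsing_inv] at h
    exact h
  -- reduced pencil
  have hKr : σ • (Wᵀ * E * V) - Wᵀ * A * V = Wᵀ * K * V := by
    simp only [hKdef, Matrix.mul_sub, Matrix.sub_mul, Matrix.mul_smul, Matrix.smul_mul]
  set Kr : Matrix (Fin k ⊕ Fin kinf) (Fin k ⊕ Fin kinf) ℂ := Wᵀ * K * V with hKrdef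
  rw [hKr]
  have hredK : IsUnit Kr := hKr ▸ hred
  have hKrdet : IsUnit Kr.det := (Matrix.isUnit_iff_isUnit_det Kr).mp hredK
  have hKrinv : Kr⁻¹ * Kr = 1 := Matrix.nonsing_inv_mul Kr hKrdet
  -- the full-order primal and dual solutions
  set v : Fin n → ℂ := K⁻¹.mulVec (B.mulVec b) with hvdef
  set u : Fin n → ℂ := (Kᵀ)⁻¹.mulVec (Cᵀ.mulVec c) with hudef
  -- v lies in the range of V
  obtain ⟨ζ, hζ⟩ := hspanV
  obtain ⟨yv, hyv⟩ := hVinf v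
  have hvV : v = V.mulVec (Sum.elim ζ yv) := by
    have h1 : Pr.mulVec v = Vf.mulVec ζ := by
      rw [hvdef, Matrix.mulVec_mulVec, ← hinv_comm, ← Matrix.mulVec_mulVec, ← hζ]
      try rfl
    have h2 : v = Pr.mulVec v + (1 - Pr).mulVec v := by
      rw [Matrix.sub_mulVec, Matrix.one_mulVec]
      try abel
    rw [hV, Matrix.fromCols_mulVec_sumElim, ← h1, ← hyv]
    try exact h2
  -- u lies in the range of W
  obtain ⟨ξ, hξ⟩ := hspanW
  obtain ⟨yw, hyw⟩ := hWinf u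
  have huW : u = W.mulVec (Sum.elim ξ yw) := by
    have h1 : Plᵀ.mulVec u = Wf.mulVec ξ := by
      rw [hudef, Matrix.mulVec_mulVec, hinvT_comm, ← Matrix.mulVec_mulVec, ← hξ]
      try rfl
    have h2 : u = Plᵀ.mulVec u + ((1 - Pl)ᵀ).mulVec u := by
      rw [Matrix.transpose_sub, Matrix.transpose_one, Matrix.sub_mulVec, Matrix.one_mulVec]
      try abel
    rw [hW, Matrix.fromCols_mulVec_sumElim, ← h1, ← hyw]
    try exact h2
  set z : Fin k ⊕ Fin kinf → ℂ := Sum.elim ζ yv with hzdef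
  set y : Fin k ⊕ Fin kinf → ℂ := Sum.elim ξ yw with hydef
  -- z solves the reduced primal system
  have hKv : K.mulVec v = B.mulVec b := by
    rw [hvdef, Matrix.mulVec_mulVec, hKinv', Matrix.one_mulVec]
  have hKrz : Kr.mulVec z = Wᵀ.mulVec (B.mulVec b) := by
    rw [hKrdef, ← Matrix.mulVec_mulVec, ← Matrix.mulVec_mulVec, ← hvV, hKv]
  have hz : z = Kr⁻¹.mulVec (Wᵀ.mulVec (B.mulVec b)) := by
    rw [← hKrz, Matrix.mulVec_mulVec, hKrinv, Matrix.one_mulVec]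
  -- y solves the reduced dual system
  have hKu : Kᵀ.mulVec u = Cᵀ.mulVec c := by
    have : Kᵀ * (Kᵀ)⁻¹ = 1 := Matrix.mul_nonsing_inv _ (by rw [Matrix.det_transpose]; exact hKdet)
    rw [hudef, Matrix.mulVec_mulVec, this, Matrix.one_mulVec]
  have hKrTinv : (Krᵀ)⁻¹ * Krᵀ = 1 :=
    Matrix.nonsing_inv_mul _ (by rw [Matrix.det_transpose]; exact hKrdet)
  have hKrTy : Krᵀ.mulVec y = Vᵀ.mulVec (Cᵀ.mulVec c) := by
    have hKrT : Krᵀ = Vᵀ * Kᵀ * W := by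
      rw [hKrdef]; simp [Matrix.transpose_mul, Matrix.mul_assoc]
    rw [hKrT, ← Matrix.mulVec_mulVec, ← Matrix.mulVec_mulVec, ← huW, hKu]
  have hy : y = (Krᵀ)⁻¹.mulVec (Vᵀ.mulVec (Cᵀ.mulVec c)) := by
    rw [← hKrTy, Matrix.mulVec_mulVec, hKrTinv, Matrix.one_mulVec]
  -- both sides equal u ⬝ᵥ E (v)
  have hdp : ∀ {a b : Type} [Fintype a] [Fintype b] (M : Matrix a b ℂ) (x : a → ℂ) (w : b → ℂ),
      x ⬝ᵥ M.mulVec w = Mᵀ.mulVec x ⬝ᵥ w := by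
    intro a b _ _ M x w
    rw [Matrix.dotProduct_mulVec, Matrix.mulVec_transpose]
  have lhs_eq : c ⬝ᵥ (C * K⁻¹ * E * K⁻¹ * B).mulVec b = u ⬝ᵥ E.mulVec v := by
    rw [← Matrix.mulVec_mulVec, ← Matrix.mulVec_mulVec, ← Matrix.mulVec_mulVec,
      ← Matrix.mulVec_mulVec, hdp, hdp, ← hvdef, Matrix.transpose_nonsing_inv, ← hudef]
  have rhs_eq : c ⬝ᵥ ((C * V) * Kr⁻¹ * (Wᵀ * E * V) * Kr⁻¹ * (Wᵀ * B)).mulVec b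
      = u ⬝ᵥ E.mulVec v := by
    rw [← Matrix.mulVec_mulVec, ← Matrix.mulVec_mulVec, ← Matrix.mulVec_mulVec,
      ← Matrix.mulVec_mulVec, hdp, hdp]
    have e1 : Kr⁻¹.mulVec ((Wᵀ * B).mulVec b) = z := by
      rw [hz, ← Matrix.mulVec_mulVec]
    have eCV : (C * V)ᵀ.mulVec c = Vᵀ.mulVec (Cᵀ.mulVec c) := by
      rw [Matrix.transpose_mul, ← Matrix.mulVec_mulVec]
    have e2 : (Kr⁻¹)ᵀ.mulVec ((C * V)ᵀ.mulVec c) = y := by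
      rw [eCV, hy, Matrix.transpose_nonsing_inv]
    rw [e1, e2, ← Matrix.mulVec_mulVec, ← Matrix.mulVec_mulVec, ← hvV, hdp,
      Matrix.transpose_transpose, ← huW]
  rw [lhs_eq, rhs_eq]
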